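/- Let G be a finite simple graph and let S be a local maximum stable set of G (i.e., S is a maximum stable set of the subgraph of G induced by N[S]). Then there exists a maximum stable set T of G with S ⊆ T. -/

import Mathlib

open Finset
open scoped Classical

/-- `S` is a stable (independent) set of `G`. -/
def IsStableSet {V : Type*} (G : SimpleGraph V) (S : Finset V) : Prop :=
  ∀ u ∈ S, ∀ v ∈ S, ¬ G.Adj u v

/-- `S` is a maximum stable set of `G`. -/
def IsMaxStableSet {V : Type*} [Fintype V] (G : SimpleGraph V) (S : Finset V) : Prop :=
  IsStableSet G S ∧ ∀ T : Finset V, IsStableSet G T → T.card ≤ S.card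

/-- The closed neighborhood `N[S]` of a set `S` of vertices of `G`. -/
noncomputable def closedNbhd {V : Type*} [Fintype V] (G : SimpleGraph V) (S : Finset V) :
    Finset V :=
  S ∪ Finset.univ.filter (fun v => ∃ u ∈ S, G.Adj u v)

/-- `S` is a local maximum stable set of `G`: it is a maximum stable set of the subgraph
of `G` induced by `N[S]`, i.e. it is stable and no stable set contained in `N[S]` is larger. -/
def IsLocalMaxStableSet {V : Type*} [Fintype V] (G : SimpleGraph V) (S : Finset V) : Prop :=
  IsStableSet G S ∧
    ∀ T : Finset V, IsStableSet G T → T ⊆ closedNbhd G S → T.card ≤ S.card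

/-- `M` is a matching of `G`: a set of pairwise disjoint edges of `G`. -/
def IsMatching {V : Type*} (G : SimpleGraph V) (M : Finset (Sym2 V)) : Prop :=
  (∀ e ∈ M, e ∈ G.edgeSet) ∧
    ∀ e ∈ M, ∀ f ∈ M, e ≠ f → ∀ v : V, v ∈ e → v ∉ f

/-- `M` is a maximum matching of `G`. -/
def IsMaxMatching {V : Type*} [Fintype V] (G : SimpleGraph V) (M : Finset (Sym2 V)) : Prop :=
  IsMatching G M ∧ ∀ N : Finset (Sym2 V), IsMatching G N → N.card ≤ M.card

/-- `M` is a matching of the subgraph of `G` induced by the vertex set `A`, i.e. a matching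
of `G` all of whose edges have both endpoints in `A`. -/
def IsMatchingOn {V : Type*} (G : SimpleGraph V) (A : Finset V) (M : Finset (Sym2 V)) : Prop :=
  IsMatching G M ∧ ∀ e ∈ M, ∀ v : V, v ∈ e → v ∈ A

/-- `M` is a maximum matching of the subgraph of `G` induced by `A`. -/
def IsMaxMatchingOn {V : Type*} [Fintype V] (G : SimpleGraph V) (A : Finset V)
    (M : Finset (Sym2 V)) : Prop :=
  IsMatchingOn G A M ∧ ∀ N : Finset (Sym2 V), IsMatchingOn G A N → N.card ≤ M.card

/-- The stability number `α` of the subgraph of `G` induced by `A`. -/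
noncomputable def stabNumOn {V : Type*} [Fintype V] (G : SimpleGraph V) (A : Finset V) : ℕ :=
  sSup {n | ∃ S : Finset V, S ⊆ A ∧ IsStableSet G S ∧ S.card = n}

/-- The matching number `μ` of the subgraph of `G` induced by `A`. -/
noncomputable def matchNumOn {V : Type*} [Fintype V] (G : SimpleGraph V) (A : Finset V) : ℕ :=
  sSup {n | ∃ M : Finset (Sym2 V), IsMatchingOn G A M ∧ M.card = n}

/-- The stability number `α(G)`. -/
noncomputable def stabNum {V : Type*} [Fintype V] (G : SimpleGraph V) : ℕ :=
  stabNumOn G Finset.univ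

/-- The matching number `μ(G)`. -/
noncomputable def matchNum {V : Type*} [Fintype V] (G : SimpleGraph V) : ℕ :=
  matchNumOn G Finset.univ

/-- `G` is a König–Egerváry graph: `α(G) + μ(G) = |V(G)|`. -/
def IsKonigEgervary {V : Type*} [Fintype V] (G : SimpleGraph V) : Prop :=
  stabNum G + matchNum G = Fintype.card V

/-- The subgraph of `G` induced by `A` is a König–Egerváry graph:
`α(G[A]) + μ(G[A]) = |A|`. -/
def IsKonigEgervaryOn {V : Type*} [Fintype V] (G : SimpleGraph V) (A : Finset V) : Prop :=
  stabNumOn G A + matchNumOn G A = A.card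

/-- Nemhauser–Trotter: every local maximum stable set of a graph is a subset
of a maximum stable set. -/
theorem localMaxStable_subset_maxStable {V : Type*} [Fintype V]
    (G : SimpleGraph V) (S : Finset V) (hS : IsLocalMaxStableSet G S) :
    ∃ T : Finset V, IsMaxStableSet G T ∧ S ⊆ T := by
  classical
  -- pick a maximum stable set T of G
  obtain ⟨T, hTmem, hTmax⟩ := Finset.exists_max_image
      ((Finset.univ : Finset (Finset V)).filter (fun T => IsStableSet G T))
      (fun T => T.card)
      ⟨∅, Finset.mem_filter.mpr ⟨Finset.mem_univ _, by simp [IsStableSet]⟩⟩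
  have hTstable : IsStableSet G T := (Finset.mem_filter.mp hTmem).2
  have hTmax' : ∀ U : Finset V, IsStableSet G U → U.card ≤ T.card := by
    intro U hU
    exact hTmax U (Finset.mem_filter.mpr ⟨Finset.mem_univ _, hU⟩)
  set A := closedNbhd G S with hA
  have hSA : S ⊆ A := Finset.subset_union_left
  -- the new set
  refine ⟨S ∪ (T \ A), ⟨?_, ?_⟩, Finset.subset_union_left⟩
  · -- stable
    intro u hu v hv hadj
    rcases Finset.mem_union.mp hu with hu | hu <;>
      rcases Finset.mem_union.mp hv with hv | hv
    · exact hS.1 u hu v hv hadj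
    · have hvA : v ∉ A := (Finset.mem_sdiff.mp hv).2
      exact hvA (Finset.mem_union_right _ (Finset.mem_filter.mpr
        ⟨Finset.mem_univ _, u, hu, hadj⟩))
    · have huA : u ∉ A := (Finset.mem_sdiff.mp hu).2
      exact huA (Finset.mem_union_right _ (Finset.mem_filter.mpr
        ⟨Finset.mem_univ _, v, hv, hadj.symm⟩))
    · exact hTstable u (Finset.mem_sdiff.mp hu).1 v (Finset.mem_sdiff.mp hv).1 hadj
  · -- maximality
    intro U hU
    have h1 : (T ∩ A).card ≤ S.card := by
      apply hS.2
      · intro u hu v hv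
        exact hTstable u (Finset.mem_inter.mp hu).1 v (Finset.mem_inter.mp hv).1
      · exact Finset.inter_subset_right
    have hdisj : Disjoint S (T \ A) := by
      refine Finset.disjoint_left.mpr ?_
      intro x hx hx'
      exact (Finset.mem_sdiff.mp hx').2 (hSA hx)
    have hcard : (S ∪ (T \ A)).card = S.card + (T \ A).card :=
      Finset.card_union_of_disjoint hdisj
    have hT' : T.card = (T ∩ A).card + (T \ A).card := by
      rw [Finset.card_inter_add_card_sdiff]
    have := hTmax' U hU
    omega
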